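/- arXiv:1312.0758 — 3 statements merged into one kernel-verified Lean document; each statement's English description precedes it below -/
import Mathlib

section
/- In an associative algebra with elements U, V invertible and satisfying UV = qVU for a nonzero scalar q, define w_m^{(k)} = q^{-km} U^m V^k. Then [w_m^{(k)}, w_n^{(l)}] = (q^{ml} - q^{nk}) w_{m+n}^{(k+l)} for all integers m,n,k,l. -/
/-- Commutation of U with integer powers of V. -/
theorem stmt_1_aux1 {F A : Type*} [Field F] [Ring A] [Algebra F A]
    (q : F) (hq : q ≠ 0) (U V : Aˣ)
    (hUV : (U : A) * V = q • ((V : A) * U)) :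
    ∀ k : ℤ, (U : A) * ((V ^ k : Aˣ) : A) = q ^ k • (((V ^ k : Aˣ) : A) * (U : A)) := by
  have hUVi : (U : A) * ((V⁻¹ : Aˣ) : A) = q⁻¹ • (((V⁻¹ : Aˣ) : A) * (U : A)) := by
    have h1 : ((V⁻¹ : Aˣ) : A) * (U : A) = q • ((U : A) * ((V⁻¹ : Aˣ) : A)) := by
      calc ((V⁻¹ : Aˣ) : A) * (U : A)
          = ((V⁻¹ : Aˣ) : A) * ((U : A) * ((V : Aˣ) : A)) * ((V⁻¹ : Aˣ) : A) := by
            rw [mul_assoc, mul_assoc, Units.mul_inv, mul_one]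
        _ = ((V⁻¹ : Aˣ) : A) * (q • (((V : Aˣ) : A) * (U : A))) * ((V⁻¹ : Aˣ) : A) := by
            rw [hUV]
        _ = q • (((V⁻¹ : Aˣ) : A) * (V : A) * ((U : A) * ((V⁻¹ : Aˣ) : A))) := by
            rw [mul_smul_comm, smul_mul_assoc, mul_assoc, mul_assoc, mul_assoc]
        _ = q • ((U : A) * ((V⁻¹ : Aˣ) : A)) := by rw [Units.inv_mul, one_mul]
    rw [h1, smul_smul, inv_mul_cancel₀ hq, one_smul]
  intro k
  induction k using Int.induction_on with
  | zero => simp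
  | succ k ih =>
      have hz : (V ^ ((k : ℤ) + 1) : Aˣ) = V ^ (k : ℤ) * V := by rw [zpow_add_one]
      rw [hz, Units.val_mul, ← mul_assoc, ih, smul_mul_assoc, mul_assoc, hUV,
        mul_smul_comm, smul_smul, ← zpow_add_one₀ hq, ← mul_assoc]
  | pred k ih =>
      have hz : (V ^ (-(k : ℤ) - 1) : Aˣ) = V ^ (-(k : ℤ)) * V⁻¹ := by
        rw [← zpow_neg_one, ← zpow_add]; ring_nf
      rw [hz, Units.val_mul, ← mul_assoc, ih, smul_mul_assoc, mul_assoc, hUVi,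
        mul_smul_comm, smul_smul, ← zpow_sub_one₀ hq, ← mul_assoc]

/-- Commutation of integer powers of U with integer powers of V. -/
theorem stmt_1_aux2 {F A : Type*} [Field F] [Ring A] [Algebra F A]
    (q : F) (hq : q ≠ 0) (U V : Aˣ)
    (hUV : (U : A) * V = q • ((V : A) * U)) :
    ∀ m k : ℤ, ((U ^ m : Aˣ) : A) * ((V ^ k : Aˣ) : A)
      = q ^ (m * k) • (((V ^ k : Aˣ) : A) * ((U ^ m : Aˣ) : A)) := by
  have aux1 := stmt_1_aux1 q hq U V hUV
  have hUi : ∀ k : ℤ, ((U⁻¹ : Aˣ) : A) * ((V ^ k : Aˣ) : A)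
      = q ^ (-k) • (((V ^ k : Aˣ) : A) * ((U⁻¹ : Aˣ) : A)) := by
    intro k
    have h1 : ((V ^ k : Aˣ) : A) * ((U⁻¹ : Aˣ) : A)
        = q ^ k • (((U⁻¹ : Aˣ) : A) * ((V ^ k : Aˣ) : A)) := by
      calc ((V ^ k : Aˣ) : A) * ((U⁻¹ : Aˣ) : A)
          = ((U⁻¹ : Aˣ) : A) * ((U : A) * ((V ^ k : Aˣ) : A)) * ((U⁻¹ : Aˣ) : A) := by
            rw [← mul_assoc, Units.inv_mul, one_mul]
        _ = ((U⁻¹ : Aˣ) : A) * (q ^ k • (((V ^ k : Aˣ) : A) * (U : A))) * ((U⁻¹ : Aˣ) : A) := by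
            rw [aux1 k]
        _ = q ^ k • (((U⁻¹ : Aˣ) : A) * ((V ^ k : Aˣ) : A) * ((U : A) * ((U⁻¹ : Aˣ) : A))) := by
            rw [mul_smul_comm, smul_mul_assoc, mul_assoc, mul_assoc, mul_assoc]
        _ = q ^ k • (((U⁻¹ : Aˣ) : A) * ((V ^ k : Aˣ) : A)) := by
            rw [Units.mul_inv, mul_one]
    rw [h1, smul_smul, ← zpow_add₀ hq, neg_add_cancel, zpow_zero, one_smul]
  intro m k
  induction m using Int.induction_on with
  | zero => simp
  | succ m ih =>
      have hz : (U ^ ((m : ℤ) + 1) : Aˣ) = U ^ (m : ℤ) * U := by rw [zpow_add_one]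
      rw [hz, Units.val_mul, mul_assoc, aux1 k, mul_smul_comm, ← mul_assoc, ih,
        smul_mul_assoc, smul_smul, mul_assoc, ← zpow_add₀ hq]
      ring_nf
  | pred m ih =>
      have hz : (U ^ (-(m : ℤ) - 1) : Aˣ) = U ^ (-(m : ℤ)) * U⁻¹ := by
        rw [← zpow_neg_one, ← zpow_add]; ring_nf
      rw [hz, Units.val_mul, mul_assoc, hUi k, mul_smul_comm, ← mul_assoc, ih,
        smul_mul_assoc, smul_smul, mul_assoc, ← zpow_add₀ hq]
      ring_nf

/-- Quantum torus relation for w_m^{(k)} = q^{-km} U^m V^k, all integer indices. -/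
theorem stmt_1 {F A : Type*} [Field F] [Ring A] [Algebra F A]
    (q : F) (hq : q ≠ 0) (U V : Aˣ)
    (hUV : (U : A) * V = q • ((V : A) * U))
    (w : ℤ → ℤ → A)
    (hw : ∀ m k : ℤ, w m k = (q ^ (k * m))⁻¹ • (((U ^ m : Aˣ) : A) * ((V ^ k : Aˣ) : A))) :
    ∀ m k n l : ℤ,
      w m k * w n l - w n l * w m k
        = (q ^ (m * l) - q ^ (n * k)) • w (m + n) (k + l) := by
  have aux2 := stmt_1_aux2 q hq U V hUV
  have hprod : ∀ a b c d : ℤ,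
      ((U ^ a : Aˣ) : A) * ((V ^ b : Aˣ) : A) * (((U ^ c : Aˣ) : A) * ((V ^ d : Aˣ) : A))
        = q ^ (-(c * b)) • (((U ^ (a + c) : Aˣ) : A) * ((V ^ (b + d) : Aˣ) : A)) := by
    intro a b c d
    have hcb : ((V ^ b : Aˣ) : A) * ((U ^ c : Aˣ) : A)
        = q ^ (-(c * b)) • (((U ^ c : Aˣ) : A) * ((V ^ b : Aˣ) : A)) := by
      rw [aux2 c b, smul_smul, ← zpow_add₀ hq, neg_add_cancel, zpow_zero, one_smul]
    calc ((U ^ a : Aˣ) : A) * ((V ^ b : Aˣ) : A) * (((U ^ c : Aˣ) : A) * ((V ^ d : Aˣ) : A))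
        = ((U ^ a : Aˣ) : A) * (((V ^ b : Aˣ) : A) * ((U ^ c : Aˣ) : A)) * ((V ^ d : Aˣ) : A) := by
          rw [mul_assoc, mul_assoc, mul_assoc]
      _ = q ^ (-(c * b)) • (((U ^ a : Aˣ) : A) * ((U ^ c : Aˣ) : A)
            * (((V ^ b : Aˣ) : A) * ((V ^ d : Aˣ) : A))) := by
          rw [hcb, mul_smul_comm, smul_mul_assoc]
          congr 1
          rw [mul_assoc, mul_assoc, mul_assoc]
      _ = q ^ (-(c * b)) • (((U ^ (a + c) : Aˣ) : A) * ((V ^ (b + d) : Aˣ) : A)) := by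
          rw [zpow_add, zpow_add, Units.val_mul, Units.val_mul]
  intro m k n l
  rw [hw, hw, hw, smul_mul_assoc, smul_mul_assoc, mul_smul_comm, mul_smul_comm,
    hprod m k n l, hprod n l m k, smul_smul, smul_smul, smul_smul, smul_smul, smul_smul,
    add_comm n m, add_comm l k, ← sub_smul]
  congr 1
  rw [← zpow_neg, ← zpow_neg, ← zpow_neg, sub_mul]
  rw [← zpow_add₀ hq, ← zpow_add₀ hq, ← zpow_add₀ hq, ← zpow_add₀ hq,
    ← zpow_add₀ hq, ← zpow_add₀ hq]
  congr 1 <;> congr 1 <;> ring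
end

section
/- In the quantum torus Lie algebra with central term, the bracket [V_{n,m}, V_{l,k}] = (q^{(ml−nk)/2} − q^{−(ml−nk)/2})(V_{n+l,m+k} − δ_{n+l,0} · q^{m+k}/(1 − q^{m+k}) · c), where c is central, satisfies the Jacobi identity (for indices with m+k ≠ 0 whenever n+l = 0 occurs, or working over the field ℚ(q^{1/2}) where 1 − q^{m+k} is invertible for m+k ≠ 0). -/
/-- The centrally extended quantum torus bracket (over ℚ(s), q = s²) is
antisymmetric and satisfies the Jacobi identity.  The basis consists of the
V_{n,m} (indexed by ℤ × ℤ, via Sum.inl) and a central element c (Sum.inr). -/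
theorem stmt_9
    (s : RatFunc ℚ) (hs : s = RatFunc.X) (q : RatFunc ℚ) (hq : q = s ^ 2)
    (Bb : (ℤ × ℤ) ⊕ Unit → (ℤ × ℤ) ⊕ Unit → ((ℤ × ℤ) ⊕ Unit →₀ RatFunc ℚ))
    (hBb1 : ∀ n m l k : ℤ, Bb (Sum.inl (n, m)) (Sum.inl (l, k))
      = (s ^ (m * l - n * k) - s ^ (-(m * l - n * k))) •
          (Finsupp.single (Sum.inl (n + l, m + k)) (1 : RatFunc ℚ) -
            (if n + l = 0 ∧ m + k ≠ 0 then q ^ (m + k) / (1 - q ^ (m + k)) else 0) •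
              Finsupp.single (Sum.inr ()) (1 : RatFunc ℚ)))
    (hBb2 : ∀ a, Bb (Sum.inr ()) a = 0)
    (hBb3 : ∀ a, Bb a (Sum.inr ()) = 0)
    (br : ((ℤ × ℤ) ⊕ Unit →₀ RatFunc ℚ) → ((ℤ × ℤ) ⊕ Unit →₀ RatFunc ℚ) →
      ((ℤ × ℤ) ⊕ Unit →₀ RatFunc ℚ))
    (hbr : ∀ x y, br x y = x.sum fun a ca => y.sum fun b cb => (ca * cb) • Bb a b) :
    (∀ x y, br x y = - br y x) ∧
    (∀ x y z, br x (br y z) + br y (br z x) + br z (br x y) = 0) := by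
  have hs0 : s ≠ 0 := by rw [hs]; exact RatFunc.X_ne_zero
  -- the key scalar identity
  have key : ∀ X Y Z : ℤ,
      (s^Y - s^(-Y)) * (s^(X - Z) - s^(-(X - Z)))
    + (s^Z - s^(-Z)) * (s^(Y - X) - s^(-(Y - X)))
    + (s^X - s^(-X)) * (s^(Z - Y) - s^(-(Z - Y))) = 0 := by
    intro X Y Z
    have hA : s^X ≠ 0 := zpow_ne_zero _ hs0
    have hB : s^Y ≠ 0 := zpow_ne_zero _ hs0
    have hC : s^Z ≠ 0 := zpow_ne_zero _ hs0
    simp only [zpow_sub₀ hs0, zpow_neg]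
    field_simp
    ring
  -- bilinearity facts for br
  have brz1 : ∀ y, br 0 y = 0 := by
    intro y; rw [hbr]; exact Finsupp.sum_zero_index
  have brz2 : ∀ x, br x 0 = 0 := by
    intro x; rw [hbr]; simp [Finsupp.sum_zero_index]
  have bradd1 : ∀ x x' y, br (x + x') y = br x y + br x' y := by
    intro x x' y; rw [hbr, hbr, hbr]
    apply Finsupp.sum_add_index' <;> intros <;>
      simp [add_mul, add_smul, Finsupp.sum_add]
  have bradd2 : ∀ x y y', br x (y + y') = br x y + br x y' := by
    intro x y y'
    rw [hbr, hbr, hbr, ← Finsupp.sum_add]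
    refine Finsupp.sum_congr fun a _ => ?_
    apply Finsupp.sum_add_index' <;> intros <;> simp [mul_add, smul_add, add_smul]
  have brsmul2 : ∀ (t : RatFunc ℚ) x y, br x (t • y) = t • br x y := by
    intro t x y
    rw [hbr, hbr, Finsupp.smul_sum]
    refine Finsupp.sum_congr fun a _ => ?_
    rw [Finsupp.sum_smul_index' (by intro b; simp), Finsupp.smul_sum]
    refine Finsupp.sum_congr fun b _ => ?_
    rw [smul_smul, smul_eq_mul]; ring_nf
  have brss : ∀ a ca b cb, br (Finsupp.single a ca) (Finsupp.single b cb)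
      = (ca * cb) • Bb a b := by
    intro a ca b cb
    rw [hbr, Finsupp.sum_single_index (by simp), Finsupp.sum_single_index (by simp)]
  have brsub2 : ∀ x y z, br x (y - z) = br x y - br x z := by
    intro x y z
    have h := bradd2 x (y - z) z
    rw [sub_add_cancel] at h
    rw [h]; abel
  have brinr : ∀ (t : RatFunc ℚ) y, br (Finsupp.single (Sum.inr ()) t) y = 0 := by
    intro t y
    rw [hbr, Finsupp.sum_single_index (by simp)]
    simp [hBb2]
  -- antisymmetry on basis elements
  have hBbanti : ∀ a b, Bb a b = - Bb b a := by
    rintro (⟨n, m⟩ | _) (⟨l, k⟩ | _)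
    · rw [hBb1, hBb1, add_comm l n, add_comm k m,
        show k * n - l * m = -(m * l - n * k) by ring, neg_neg, ← neg_smul]
      congr 1
      ring
    · simp [hBb2, hBb3]
    · simp [hBb2, hBb3]
    · simp [hBb2, hBb3]
  constructor
  · -- antisymmetry
    intro x y
    induction x using Finsupp.induction_linear with
    | zero => simp [brz1, brz2]
    | add f g hf hg => rw [bradd1, bradd2, hf, hg]; abel
    | single a ca =>
      induction y using Finsupp.induction_linear with
      | zero => simp [brz1, brz2]
      | add f g hf hg => rw [bradd2, bradd1, hf, hg]; abel
      | single b cb =>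
        rw [brss, brss, hBbanti a b, mul_comm]
        simp [smul_neg]
  · -- Jacobi identity
    intro x y z
    induction x using Finsupp.induction_linear with
    | zero => simp [brz1, brz2]
    | add f g hf hg =>
      simp only [bradd1, bradd2]
      have h := congrArg₂ (· + ·) hf hg
      abel_nf at h ⊢
      exact h
    | single a ca =>
      induction y using Finsupp.induction_linear with
      | zero => simp [brz1, brz2]
      | add f g hf hg =>
        simp only [bradd1, bradd2]
        linear_combination (norm := module) hf + hg
      | single b cb =>
        induction z using Finsupp.induction_linear with
        | zero => simp [brz1, brz2]
        | add f g hf hg =>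
          simp only [bradd1, bradd2]
          have h := congrArg₂ (· + ·) hf hg
          abel_nf at h ⊢
          exact h
        | single c cc =>
          rw [brss, brss, brss, brsmul2, brsmul2, brsmul2]
          rcases a with ⟨n, m⟩ | u
          rotate_left
          · simp [hBb2, hBb3, brinr, brz2, brsmul2]
          rcases b with ⟨l, k⟩ | u
          rotate_left
          · simp [hBb2, hBb3, brinr, brz2, brsmul2]
          rcases c with ⟨p, r⟩ | u
          rotate_left
          · simp [hBb2, hBb3, brinr, brz2, brsmul2]
          -- the main case: all three are V-basis vectors
          have Bkey :
              (s ^ (k * p - l * r) - s ^ (-(k * p - l * r))) •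
                Bb (Sum.inl (n, m)) (Sum.inl (l + p, k + r))
            + (s ^ (r * n - p * m) - s ^ (-(r * n - p * m))) •
                Bb (Sum.inl (l, k)) (Sum.inl (p + n, r + m))
            + (s ^ (m * l - n * k) - s ^ (-(m * l - n * k))) •
                Bb (Sum.inl (p, r)) (Sum.inl (n + l, m + k)) = 0 := by
            rw [hBb1, hBb1, hBb1,
              show n + (l + p) = n + l + p by ring,
              show m + (k + r) = m + k + r by ring,
              show l + (p + n) = n + l + p by ring,
              show k + (r + m) = m + k + r by ring,
              show p + (n + l) = n + l + p by ring,
              show r + (m + k) = m + k + r by ring,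
              smul_smul, smul_smul, smul_smul, ← add_smul, ← add_smul]
            have hsc :
                (s ^ (k * p - l * r) - s ^ (-(k * p - l * r))) *
                    (s ^ (m * (l + p) - n * (k + r)) - s ^ (-(m * (l + p) - n * (k + r))))
                + (s ^ (r * n - p * m) - s ^ (-(r * n - p * m))) *
                    (s ^ (k * (p + n) - l * (r + m)) - s ^ (-(k * (p + n) - l * (r + m))))
                + (s ^ (m * l - n * k) - s ^ (-(m * l - n * k))) *
                    (s ^ (r * (n + l) - p * (m + k)) - s ^ (-(r * (n + l) - p * (m + k)))) = 0 := by
              rw [show m * (l + p) - n * (k + r) = (m * l - n * k) - (r * n - p * m) by ring,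
                show k * (p + n) - l * (r + m) = (k * p - l * r) - (m * l - n * k) by ring,
                show r * (n + l) - p * (m + k) = (r * n - p * m) - (k * p - l * r) by ring]
              exact key (m * l - n * k) (k * p - l * r) (r * n - p * m)
            rw [hsc, zero_smul]
          rw [hBb1 l k p r, hBb1 p r n m, hBb1 n m l k]
          simp only [brsmul2, brsub2, brss, hBb3, smul_zero, mul_one, sub_zero, smul_sub]
          have h2 := congrArg (fun v => (ca * cb * cc) • v) Bkey
          simp only [smul_add, smul_zero, smul_smul] at h2 ⊢
          ring_nf at h2 ⊢
          exact h2
end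

section
/- With L, M as dressed operators (L = Φ∂Φ^{-1}, M = ΦΓΦ^{-1}) where Φ* = ∂Φ^{-1}∂^{-1}, Γ* = Γ, and L* = −∂L∂^{-1}, the operator B_{mn} := M^m L^n − (−1)^n L^{n−1} M^m L satisfies the B-type condition B_{mn}* = −∂ B_{mn} ∂^{-1} for all integers m ≥ 0, n. -/
/-- B-type condition for B_{mn} = M^m L^n - (-1)^n L^{n-1} M^m L. -/
theorem stmt_14 {A : Type*} [Ring A] (st : A →+ A)
    (hanti : ∀ a b : A, st (a * b) = st b * st a)
    (hinv : ∀ a : A, st (st a) = a)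
    (d : Aˣ) (hd : st (d : A) = -(d : A))
    (L : Aˣ) (M : A)
    (hL : st (L : A) = -((d : A) * (L : A) * ((d⁻¹ : Aˣ) : A)))
    (hM : st M = (d : A) * ((L⁻¹ : Aˣ) : A) * M * (L : A) * ((d⁻¹ : Aˣ) : A))
    (B : ℕ → ℤ → A)
    (hB : ∀ (m : ℕ) (n : ℤ), B m n
      = M ^ m * ((L ^ n : Aˣ) : A) -
          (((-1 : Aˣ) ^ n : Aˣ) : A) * ((L ^ (n - 1) : Aˣ) : A) * M ^ m * (L : A)) :
    ∀ (m : ℕ) (n : ℤ), st (B m n) = -((d : A) * B m n * ((d⁻¹ : Aˣ) : A)) := by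
  -- st 1 = 1
  have hst1 : st (1 : A) = 1 := by
    have h := hanti (st 1) 1
    rw [mul_one, hinv] at h
    simpa using h.symm
  -- inverses
  have hstinv : ∀ u v : Aˣ, st (u : A) = (v : A) → st ((u⁻¹ : Aˣ) : A) = ((v⁻¹ : Aˣ) : A) := by
    intro u v h
    have h1 : st ((u⁻¹ : Aˣ) : A) * (v : A) = 1 := by
      rw [← h, ← hanti, Units.mul_inv, hst1]
    calc st ((u⁻¹ : Aˣ) : A) = st ((u⁻¹ : Aˣ) : A) * (v : A) * ((v⁻¹ : Aˣ) : A) := by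
          rw [mul_assoc, Units.mul_inv, mul_one]
      _ = ((v⁻¹ : Aˣ) : A) := by rw [h1, one_mul]
  -- zpow
  have hstzpow : ∀ u v : Aˣ, st (u : A) = (v : A) → ∀ n : ℤ,
      st ((u ^ n : Aˣ) : A) = ((v ^ n : Aˣ) : A) := by
    intro u v h n
    induction n using Int.induction_on with
    | zero => simpa using hst1
    | succ k ih =>
        have h2 : (u ^ ((k : ℤ) + 1) : Aˣ) = u ^ (k : ℤ) * u := by
          rw [zpow_add_one]
        rw [h2, Units.val_mul, hanti, h, ih, ← Units.val_mul, ← zpow_one_add]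
        congr 2
        omega
    | pred k ih =>
        have h2 : (u ^ (-(k : ℤ) - 1) : Aˣ) = u ^ (-(k : ℤ)) * u⁻¹ := by
          rw [sub_eq_add_neg, zpow_add, zpow_neg_one]
        rw [h2, Units.val_mul, hanti, hstinv u v h, ih, ← Units.val_mul,
            ← zpow_neg_one v, ← zpow_add]
        congr 2
        omega
  -- st on powers of M
  have hstMp : ∀ m : ℕ, st (M ^ m) = (d : A) * ((L⁻¹ : Aˣ) : A) * M ^ m * (L : A) * ((d⁻¹ : Aˣ) : A) := by
    intro m
    induction m with
    | zero =>
        rw [pow_zero, hst1, mul_one]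
        simp [mul_assoc]
    | succ k ih =>
        rw [pow_succ, hanti, hM, ih]
        simp only [mul_assoc, Units.inv_mul_cancel_left, Units.mul_inv_cancel_left, pow_succ']
        congr 2
        simp only [← mul_assoc]
        rw [pow_mul_comm']
  -- the unit v with st L = v
  set v : Aˣ := -(d * L * d⁻¹) with hv
  have hLv : st (L : A) = (v : A) := by
    rw [hL, hv]; simp [Units.val_mul]
  have hvpow : ∀ n : ℤ, ((v ^ n : Aˣ) : A)
      = (((-1 : Aˣ) ^ n : Aˣ) : A) * ((d : A) * ((L ^ n : Aˣ) : A) * ((d⁻¹ : Aˣ) : A)) := by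
    intro n
    have hneg : v = (-1 : Aˣ) * (d * L * d⁻¹) := by
      ext; simp [hv]
    have hc : Commute (-1 : Aˣ) (d * L * d⁻¹) := by
      ext; simp [Units.val_mul]
    rw [hneg, hc.mul_zpow, Units.val_mul, conj_zpow]
    simp [Units.val_mul, mul_assoc]
  intro m n
  -- sign facts
  have hodd : Odd n → ((-1 : Aˣ) ^ n) = -1 := by
    rintro ⟨k, rfl⟩
    rw [zpow_add, zpow_one, Even.neg_one_zpow ⟨k, two_mul k⟩, one_mul]
  have hsgn : ∀ a : A, (((-1 : Aˣ) ^ n : Aˣ) : A) * a = a * (((-1 : Aˣ) ^ n : Aˣ) : A) := by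
    intro a
    rcases Int.even_or_odd n with he | ho
    · rw [he.neg_one_zpow]; simp
    · rw [hodd ho]; simp
  have hsq : (((-1 : Aˣ) ^ n : Aˣ) : A) * (((-1 : Aˣ) ^ n : Aˣ) : A) = 1 := by
    rcases Int.even_or_odd n with he | ho
    · rw [he.neg_one_zpow]; simp
    · rw [hodd ho]; simp
  have hste : st ((((-1 : Aˣ) ^ n : Aˣ)) : A) = (((-1 : Aˣ) ^ n : Aˣ) : A) := by
    rcases Int.even_or_odd n with he | ho
    · rw [he.neg_one_zpow]; simpa using hst1
    · rw [hodd ho]; simp [hst1]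
  have hLnL : ((L ^ n : Aˣ) : A) * ((L⁻¹ : Aˣ) : A) = ((L ^ (n - 1) : Aˣ) : A) := by
    rw [← Units.val_mul]; congr 1; rw [zpow_sub_one]
  have hLL : ((L ^ (n - 1) : Aˣ) : A) * (L : A) = ((L ^ n : Aˣ) : A) := by
    rw [← Units.val_mul]; congr 1
    rw [← zpow_add_one]; congr 1; omega
  have hLL2 : (L : A) * ((L ^ (n - 1) : Aˣ) : A) = ((L ^ n : Aˣ) : A) := by
    rw [← Units.val_mul]; congr 1
    rw [← zpow_one_add]; congr 1; omega
  have E1 : st (M ^ m * ((L ^ n : Aˣ) : A))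
      = (((-1 : Aˣ) ^ n : Aˣ) : A) * ((d : A) * ((L ^ (n - 1) : Aˣ) : A) * M ^ m * (L : A) * ((d⁻¹ : Aˣ) : A)) := by
    rw [hanti, hstzpow L v hLv n, hvpow n, hstMp m]
    simp only [mul_assoc, Units.inv_mul_cancel_left]
    simp only [← mul_assoc]
    rw [mul_assoc ((((-1 : Aˣ) ^ n : Aˣ) : A) * (d : A)) ((L ^ n : Aˣ) : A) ((L⁻¹ : Aˣ) : A), hLnL]
  have he' : (((-1 : Aˣ) ^ (n - 1) : Aˣ) : A) = -(((-1 : Aˣ) ^ n : Aˣ) : A) := by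
    rw [zpow_sub_one]
    simp
  have hkey : ∀ X : A, (((-1 : Aˣ) ^ (n - 1) : Aˣ) : A) * X * (((-1 : Aˣ) ^ n : Aˣ) : A) = -X := by
    intro X
    rw [he', neg_mul, neg_mul, hsgn X, mul_assoc, hsq, mul_one]
  have hvval : (v : A) = -((d : A) * (L : A) * ((d⁻¹ : Aˣ) : A)) := by
    simp [hv, Units.val_mul]
  have E2 : st ((((-1 : Aˣ) ^ n : Aˣ) : A) * ((L ^ (n - 1) : Aˣ) : A) * M ^ m * (L : A))
      = (d : A) * M ^ m * ((L ^ n : Aˣ) : A) * ((d⁻¹ : Aˣ) : A) := by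
    rw [hanti, hanti, hanti, hLv, hstMp m, hstzpow L v hLv (n - 1), hvpow (n - 1), hste]
    rw [hkey, hvval]
    simp only [mul_neg, neg_mul, neg_neg]
    simp only [mul_assoc, Units.inv_mul_cancel_left, Units.mul_inv_cancel_left]
    rw [← mul_assoc (L : A) ((L ^ (n - 1) : Aˣ) : A) ((d⁻¹ : Aˣ) : A), hLL2]
  rw [hB, map_sub, E1, E2]
  rw [mul_sub, sub_mul, neg_sub]
  congr 1
  · simp only [← mul_assoc]
    rw [← hsgn (d : A)]
  · simp only [mul_assoc]
end
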